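/- Let H be a Hermitian operator on ℂ^d with non-degenerate energy gaps, let ρ_0 be any density matrix on ℂ^d with time evolution ρ_t = e^{−iHt} ρ_0 e^{iHt}, let ω = $[ρ_0], and let A be any Hermitian operator on ℂ^d. Then limsup_{τ→∞} (1/τ) ∫_0^τ (Tr[A ρ_t] − Tr[A ω])² dt ≤ ‖A‖∞² / d^eff(ω). -/

import Mathlib

open MeasureTheory Matrix Filter
open scoped BigOperators Kronecker InnerProductSpace ComplexOrder

noncomputable section

namespace PQSM

variable {n : Type*} [Fintype n] [DecidableEq n]

instance : MeasurableSpace (EuclideanSpace ℂ n) := MeasurableSpace.comap WithLp.ofLp MeasurableSpace.pi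

/-- The outer product (pure state density matrix) `|u⟩⟨u|` of a vector with itself. -/
def outer (u : EuclideanSpace ℂ n) : Matrix n n ℂ :=
  fun i j => u i * (starRingEnd ℂ) (u j)

/-- Operator norm of a matrix acting on Euclidean space. -/
def opNorm (A : Matrix n n ℂ) : ℝ := ‖Matrix.toEuclideanCLM (𝕜 := ℂ) A‖

/-- Trace norm `Tr √(AᴴA)`. -/
def traceNorm (A : Matrix n n ℂ) : ℝ :=
  (((Matrix.posSemidef_conjTranspose_mul_self A).1.eigenvectorUnitary : Matrix n n ℂ) *
    diagonal (((↑) : ℝ → ℂ) ∘ Real.sqrt ∘ (Matrix.posSemidef_conjTranspose_mul_self A).1.eigenvalues) *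
    (star (Matrix.posSemidef_conjTranspose_mul_self A).1.eigenvectorUnitary : Matrix n n ℂ)).trace.re

/-- Trace distance `½‖ρ − σ‖₁`. -/
def traceDist (ρ σ : Matrix n n ℂ) : ℝ := traceNorm (ρ - σ) / 2

/-- Real expectation value `Re Tr[B ρ]`. -/
def expVal (B ρ : Matrix n n ℂ) : ℝ := ((B * ρ).trace).re

/-- Purity `Tr[ρ²]`. -/
def purity (ρ : Matrix n n ℂ) : ℝ := ((ρ * ρ).trace).re

/-- Effective dimension `1/Tr[ρ²]`. -/
def dEff (ρ : Matrix n n ℂ) : ℝ := 1 / purity ρ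

/-- An orthogonal projector. -/
def IsProjector (P : Matrix n n ℂ) : Prop := P.IsHermitian ∧ P * P = P

/-- A density matrix: positive semidefinite with unit trace. -/
def IsDensityMatrix (ρ : Matrix n n ℂ) : Prop := ρ.PosSemidef ∧ ρ.trace = 1

/-- The microcanonical state `Π_R/d_R` of the subspace with projector `P` of dimension `dR`. -/
def mcState (P : Matrix n n ℂ) (dR : ℕ) : Matrix n n ℂ := ((dR : ℂ))⁻¹ • P

/-- `μ` is the uniform (rotation-invariant, Haar) probability measure on the unit sphere of the
subspace of `ℂ^n` whose orthogonal projector is `P`: `μ` is a probability measure, it is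
concentrated on the unit vectors fixed by `P`, and it is invariant under every unitary of the
full space that preserves the subspace (equivalently, commutes with `P`). -/
def IsUniformOnSphere (P : Matrix n n ℂ) (μ : Measure (EuclideanSpace ℂ n)) : Prop :=
  IsProbabilityMeasure μ ∧
  (∀ᵐ u ∂μ, ‖u‖ = 1 ∧ Matrix.toEuclideanCLM (𝕜 := ℂ) P u = u) ∧
  ∀ U ∈ Matrix.unitaryGroup n ℂ,
    U * P = P * U →
    Measure.map (fun u => Matrix.toEuclideanCLM (𝕜 := ℂ) U u) μ = μ

/-- Non-degenerate energy gaps. -/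
def HasNonDegenerateGaps {H : Matrix n n ℂ} (hH : H.IsHermitian) : Prop :=
  ∀ k l m p : n, hH.eigenvalues k - hH.eigenvalues l = hH.eigenvalues m - hH.eigenvalues p →
    (k = l ∧ m = p) ∨ (k = m ∧ l = p)

/-- Dephasing `$[ρ] = Σ_k |E_k⟩⟨E_k| ρ |E_k⟩⟨E_k|` with respect to the eigenbasis of `H`. -/
def dephase {H : Matrix n n ℂ} (hH : H.IsHermitian) (ρ : Matrix n n ℂ) : Matrix n n ℂ :=
  ∑ k, outer (hH.eigenvectorBasis k) * ρ * outer (hH.eigenvectorBasis k)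

/-- Time evolution `ρ_t = e^{−iHt} ρ e^{iHt}`. -/
def evol (H : Matrix n n ℂ) (t : ℝ) (ρ : Matrix n n ℂ) : Matrix n n ℂ :=
  NormedSpace.exp ((-(Complex.I * t)) • H) * ρ * NormedSpace.exp ((Complex.I * t) • H)

variable {nS nB : Type*} [Fintype nS] [Fintype nB]

/-- Partial trace over the second (bath) tensor factor. -/
def ptraceB (M : Matrix (nS × nB) (nS × nB) ℂ) : Matrix nS nS ℂ :=
  fun i j => ∑ b, M (i, b) (j, b)

/-- Partial trace over the first (system) tensor factor. -/
def ptraceS (M : Matrix (nS × nB) (nS × nB) ℂ) : Matrix nB nB ℂ :=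
  fun i j => ∑ a, M (a, i) (a, j)

/-- Tensor product of vectors. -/
def tensorVec (u : EuclideanSpace ℂ nS) (v : EuclideanSpace ℂ nB) :
    EuclideanSpace ℂ (nS × nB) := WithLp.toLp 2 (fun p => u p.1 * v p.2)

/-- Von Neumann entropy `−Σ λ_i log λ_i` (with `0 log 0 = 0`). -/
def vnEntropy (ρ : Matrix n n ℂ) : ℝ :=
  if h : ρ.IsHermitian then -∑ i, h.eigenvalues i * Real.log (h.eigenvalues i) else 0

/-- Quantum mutual information `I_{SB}(ρ) = S(ρ^S) + S(ρ^B) − S(ρ)`. -/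
def mutualInfo [DecidableEq nS] [DecidableEq nB] (ρ : Matrix (nS × nB) (nS × nB) ℂ) : ℝ :=
  vnEntropy (ptraceB ρ) + vnEntropy (ptraceS ρ) - vnEntropy ρ



/-! ### Auxiliary lemmas for the equilibration theorem -/

section EquilibrationAux

variable {d : ℕ}

lemma exp_smul_herm (H : Matrix (Fin d) (Fin d) ℂ) (hH : H.IsHermitian) (c : ℂ) :
    NormedSpace.exp (c • H) =
      (hH.eigenvectorUnitary : Matrix (Fin d) (Fin d) ℂ) *
        Matrix.diagonal (fun k => Complex.exp (c * hH.eigenvalues k)) *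
        star (hH.eigenvectorUnitary : Matrix (Fin d) (Fin d) ℂ) := by
  set U := (hH.eigenvectorUnitary : Matrix (Fin d) (Fin d) ℂ) with hUdef
  have hU1 : star U * U = 1 := Matrix.mem_unitaryGroup_iff'.mp hH.eigenvectorUnitary.2
  have hU2 : U * star U = 1 := Matrix.mem_unitaryGroup_iff.mp hH.eigenvectorUnitary.2
  have hUnit : IsUnit U := ⟨⟨U, star U, hU2, hU1⟩, rfl⟩
  have hinv : U⁻¹ = star U := inv_eq_left_inv hU1
  have h1 : c • H = U * (c • Matrix.diagonal (RCLike.ofReal ∘ hH.eigenvalues)) * star U := by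
    conv_lhs => rw [hH.spectral_theorem, Unitary.conjStarAlgAut_apply]
    rw [Matrix.mul_smul, Matrix.smul_mul]
  rw [h1, ← hinv, Matrix.exp_conj U _ hUnit, hinv]
  congr 2
  rw [← Matrix.diagonal_smul, Matrix.exp_diagonal]
  have : (NormedSpace.exp (c • (RCLike.ofReal ∘ hH.eigenvalues)) : Fin d → ℂ)
      = fun k => Complex.exp (c * hH.eigenvalues k) := by
    funext k
    rw [Pi.coe_exp, ← Complex.exp_eq_exp_ℂ]
    simp [Function.comp, mul_comm]
  rw [this]

lemma sum_corners (M : Matrix (Fin d) (Fin d) ℂ) :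
    ∑ k, Matrix.single k k (1:ℂ) * M * Matrix.single k k 1
      = Matrix.diagonal (fun k => M k k) := by
  ext i j
  simp [Matrix.sum_apply, Matrix.mul_apply, Matrix.single, Matrix.diagonal_apply,
    Finset.sum_ite_eq, ite_and]
  by_cases h : i = j <;> simp [h]
  intro h'; exact absurd h'.symm h

lemma outer_eq_conj (H : Matrix (Fin d) (Fin d) ℂ) (hH : H.IsHermitian) (k : Fin d) :
    outer (hH.eigenvectorBasis k) =
      (hH.eigenvectorUnitary : Matrix (Fin d) (Fin d) ℂ) * Matrix.single k k 1 *
        star (hH.eigenvectorUnitary : Matrix (Fin d) (Fin d) ℂ) := by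
  ext i j
  simp [outer, Matrix.mul_apply, Matrix.single, Matrix.star_apply, ite_and,
    Finset.sum_ite_eq, mul_comm]

lemma avg_bound {ι : Type*} [Fintype ι] [DecidableEq ι] (S : Finset ι) (c : ι → ℂ) (θ : ι → ℝ)
    (hinj : ∀ p ∈ S, ∀ q ∈ S, θ p = θ q → p = q) :
    ∃ C : ℝ, 0 ≤ C ∧ ∀ τ : ℝ,
      (∫ t in (0:ℝ)..τ, Complex.normSq (∑ p ∈ S, Complex.exp (Complex.I * θ p * t) * c p))
        ≤ τ * (∑ p ∈ S, Complex.normSq (c p)) + C := by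
  classical
  set w : ι × ι → ℂ := fun pq => c pq.1 * (starRingEnd ℂ) (c pq.2) with hw
  set δ : ι × ι → ℝ := fun pq => θ pq.1 - θ pq.2 with hδ
  set T : Finset (ι × ι) := S ×ˢ S with hT
  have hpt : ∀ t : ℝ, Complex.normSq (∑ p ∈ S, Complex.exp (Complex.I * θ p * t) * c p)
      = ∑ pq ∈ T, (Complex.exp (Complex.I * δ pq * t) * w pq).re := by
    intro t
    have h1 : (Complex.normSq (∑ p ∈ S, Complex.exp (Complex.I * θ p * t) * c p) : ℝ)
        = ((∑ p ∈ S, Complex.exp (Complex.I * θ p * t) * c p) *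
            (starRingEnd ℂ) (∑ p ∈ S, Complex.exp (Complex.I * θ p * t) * c p)).re := by
      rw [Complex.mul_conj]; simp
    rw [h1, map_sum, Finset.sum_mul_sum, ← Finset.sum_product', Complex.re_sum]
    apply Finset.sum_congr rfl
    intro pq _
    congr 1
    rw [_root_.map_mul, ← Complex.exp_conj]
    have hc : (starRingEnd ℂ) (Complex.I * θ pq.2 * t) = -(Complex.I * θ pq.2 * t) := by
      simp [Complex.conj_ofReal]
    rw [hc, mul_comm (Complex.exp _) (c pq.1), mul_assoc, ← mul_assoc (Complex.exp _),
      ← Complex.exp_add]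
    have : Complex.I * θ pq.1 * t + -(Complex.I * θ pq.2 * t)
        = Complex.I * (δ pq : ℝ) * t := by push_cast [hδ]; ring
    rw [this]; ring
  have hc1 : ∀ pq : ι × ι, Continuous fun t : ℝ => Complex.exp (Complex.I * δ pq * t) * w pq :=
    fun pq => (Complex.continuous_exp.comp
      (continuous_const.mul Complex.continuous_ofReal)).mul continuous_const
  have hcont : ∀ pq : ι × ι,
      Continuous fun t : ℝ => (Complex.exp (Complex.I * δ pq * t) * w pq).re :=
    fun pq => Complex.continuous_re.comp (hc1 pq)
  refine ⟨∑ pq ∈ T, (if pq.1 = pq.2 then 0 else 2 * ‖w pq‖ / |δ pq|), ?_, ?_⟩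
  · apply Finset.sum_nonneg
    intro pq _
    split
    · exact le_rfl
    · positivity
  intro τ
  have hint : (∫ t in (0:ℝ)..τ, Complex.normSq (∑ p ∈ S, Complex.exp (Complex.I * θ p * t) * c p))
      = ∑ pq ∈ T, ∫ t in (0:ℝ)..τ, (Complex.exp (Complex.I * δ pq * t) * w pq).re := by
    rw [intervalIntegral.integral_congr (g := fun t => ∑ pq ∈ T,
        (Complex.exp (Complex.I * δ pq * t) * w pq).re) (fun t _ => hpt t)]
    exact intervalIntegral.integral_finset_sum
      (fun pq _ => ((hcont pq).intervalIntegrable _ _))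
  rw [hint]
  have hbound : ∀ pq ∈ T, (∫ t in (0:ℝ)..τ, (Complex.exp (Complex.I * δ pq * t) * w pq).re)
      ≤ (if pq.1 = pq.2 then τ * Complex.normSq (c pq.1) else 0)
        + (if pq.1 = pq.2 then 0 else 2 * ‖w pq‖ / |δ pq|) := by
    intro pq hpq
    by_cases hd : pq.1 = pq.2
    · simp only [hd, if_true, add_zero]
      have hδ0 : δ pq = 0 := by simp [hδ, hd]
      have : ∀ t : ℝ, (Complex.exp (Complex.I * δ pq * t) * w pq).re
          = Complex.normSq (c pq.1) := by
        intro t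
        simp [hδ0, hw, hd, Complex.mul_conj]
      rw [intervalIntegral.integral_congr (fun t _ => this t)]
      simp [smul_eq_mul, hd]
    · simp only [hd, if_false, zero_add]
      have hδ0 : δ pq ≠ 0 := by
        intro h
        exact hd (hinj pq.1 (Finset.mem_product.mp hpq).1 pq.2 (Finset.mem_product.mp hpq).2
          (by linarith [sub_eq_zero.mp h]))
      have hc0 : Complex.I * δ pq ≠ 0 := by
        simp [Complex.I_ne_zero, Complex.ofReal_eq_zero, hδ0]
      have hre := Complex.reCLM.intervalIntegral_comp_comm
        (μ := MeasureTheory.volume) (a := (0:ℝ)) (b := τ) ((hc1 pq).intervalIntegrable _ _)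
      simp only [Complex.reCLM_apply] at hre
      rw [hre]
      have hval : (∫ t in (0:ℝ)..τ, Complex.exp (Complex.I * δ pq * t) * w pq)
          = ((Complex.exp (Complex.I * δ pq * τ) - 1) / (Complex.I * δ pq)) * w pq := by
        rw [intervalIntegral.integral_mul_const]
        congr 1
        have : ∀ t : ℝ, Complex.exp (Complex.I * δ pq * t)
            = Complex.exp ((Complex.I * δ pq) * t) := by
          intro t; ring_nf
        rw [intervalIntegral.integral_congr (fun t _ => this t), integral_exp_mul_complex hc0]
        simp
      rw [hval]
      calc (((Complex.exp (Complex.I * δ pq * τ) - 1) / (Complex.I * δ pq)) * w pq).re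
          ≤ ‖((Complex.exp (Complex.I * δ pq * τ) - 1) / (Complex.I * δ pq)) * w pq‖ :=
            Complex.re_le_norm _
        _ = ‖Complex.exp (Complex.I * δ pq * τ) - 1‖ / ‖Complex.I * δ pq‖
              * ‖w pq‖ := by rw [norm_mul, norm_div]
        _ ≤ 2 / |δ pq| * ‖w pq‖ := by
            apply mul_le_mul_of_nonneg_right _ (norm_nonneg _)
            have habsd : ‖Complex.I * (δ pq : ℝ)‖ = |δ pq| := by
              rw [norm_mul]; simp
            have hpos : (0:ℝ) < |δ pq| := abs_pos.mpr hδ0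
            have hnum : ‖Complex.exp (Complex.I * δ pq * τ) - 1‖ ≤ 2 := by
              calc ‖Complex.exp (Complex.I * δ pq * τ) - 1‖
                  ≤ ‖Complex.exp (Complex.I * δ pq * τ)‖ + 1 := by
                    simpa using norm_sub_le (Complex.exp (Complex.I * δ pq * τ)) 1
                _ ≤ 2 := by
                    rw [Complex.norm_exp]
                    norm_num [Complex.mul_re, Complex.ofReal_re, Complex.ofReal_im,
                      Complex.I_re, Complex.I_im]
            rw [habsd]
            exact (div_le_div_iff_of_pos_right hpos).mpr hnum
        _ = 2 * ‖w pq‖ / |δ pq| := by ring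
  calc (∑ pq ∈ T, ∫ t in (0:ℝ)..τ, (Complex.exp (Complex.I * δ pq * t) * w pq).re)
      ≤ ∑ pq ∈ T, ((if pq.1 = pq.2 then τ * Complex.normSq (c pq.1) else 0)
        + (if pq.1 = pq.2 then 0 else 2 * ‖w pq‖ / |δ pq|)) :=
        Finset.sum_le_sum hbound
    _ = (∑ pq ∈ T, if pq.1 = pq.2 then τ * Complex.normSq (c pq.1) else 0)
        + ∑ pq ∈ T, (if pq.1 = pq.2 then 0 else 2 * ‖w pq‖ / |δ pq|) :=
        Finset.sum_add_distrib
    _ = τ * (∑ p ∈ S, Complex.normSq (c p))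
        + ∑ pq ∈ T, (if pq.1 = pq.2 then 0 else 2 * ‖w pq‖ / |δ pq|) := by
        congr 1
        rw [hT, Finset.sum_product, Finset.mul_sum]
        apply Finset.sum_congr rfl
        intro p hp
        simp [Finset.sum_ite_eq, hp]

lemma psd_entry_sq (M : Matrix (Fin d) (Fin d) ℂ) (hM : M.PosSemidef) (k l : Fin d) :
    Complex.normSq (M k l) ≤ (M k k).re * (M l l).re := by
  obtain ⟨B, rfl⟩ : ∃ B : Matrix (Fin d) (Fin d) ℂ, M = Bᴴ * B := by
    open scoped MatrixOrder in
    obtain ⟨B, hB⟩ := CStarAlgebra.nonneg_iff_eq_star_mul_self.mp hM.nonneg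
    exact ⟨B, hB⟩
  set col : Fin d → EuclideanSpace ℂ (Fin d) := fun a => WithLp.toLp 2 (fun r => B r a) with hcol
  have hentry : ∀ a b : Fin d, (Bᴴ * B) a b = (inner ℂ (col a) (col b) : ℂ) := by
    intro a b
    rw [Matrix.mul_apply, PiLp.inner_apply]
    simp [Matrix.conjTranspose_apply, RCLike.inner_apply, hcol]
    exact Finset.sum_congr rfl (fun _ _ => mul_comm _ _)
  rw [hentry, hentry, hentry]
  have h1 : Complex.normSq (inner ℂ (col k) (col l) : ℂ)
      = ‖(inner ℂ (col k) (col l) : ℂ)‖ ^ 2 := by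
    rw [← Complex.sq_norm]
  rw [h1]
  have h2 : ‖(inner ℂ (col k) (col l) : ℂ)‖ ≤ ‖col k‖ * ‖col l‖ := norm_inner_le_norm _ _
  have h3 : ((inner ℂ (col k) (col k) : ℂ)).re = ‖col k‖ ^ 2 := by
    simpa using inner_self_eq_norm_sq (𝕜 := ℂ) (col k)
  have h4 : ((inner ℂ (col l) (col l) : ℂ)).re = ‖col l‖ ^ 2 := by
    simpa using inner_self_eq_norm_sq (𝕜 := ℂ) (col l)
  calc ‖(inner ℂ (col k) (col l) : ℂ)‖ ^ 2 ≤ (‖col k‖ * ‖col l‖) ^ 2 := by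
        nlinarith [norm_nonneg (inner ℂ (col k) (col l) : ℂ)]
    _ = ‖col k‖^2 * ‖col l‖^2 := by ring
    _ = _ := by rw [h3, h4]

lemma double_cs {ι : Type*} [Fintype ι] (p : ι → ℝ) (m : ι → ι → ℝ)
    (hm : ∀ k l, 0 ≤ m k l) (hsym : ∀ k l, m k l = m l k) :
    ∑ k, ∑ l, p k * p l * m k l ≤ ∑ k, ∑ l, (p k)^2 * m k l := by
  classical
  set T : Finset (ι × ι) := Finset.univ ×ˢ Finset.univ with hT
  have hF : (0:ℝ) ≤ ∑ k, ∑ l, (p k)^2 * m k l := by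
    apply Finset.sum_nonneg; intro k _; apply Finset.sum_nonneg; intro l _
    exact mul_nonneg (sq_nonneg _) (hm k l)
  have key : (∑ k, ∑ l, p k * p l * m k l) ^ 2 ≤ (∑ k, ∑ l, (p k)^2 * m k l) ^ 2 := by
    have hlhs : ∑ k, ∑ l, p k * p l * m k l
        = ∑ pq ∈ T, (p pq.1 * Real.sqrt (m pq.1 pq.2)) * (p pq.2 * Real.sqrt (m pq.1 pq.2)) := by
      rw [hT, Finset.sum_product]
      apply Finset.sum_congr rfl; intro k _; apply Finset.sum_congr rfl; intro l _
      rw [mul_mul_mul_comm, Real.mul_self_sqrt (hm k l)]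
    have hf2 : ∑ pq ∈ T, (p pq.1 * Real.sqrt (m pq.1 pq.2))^2
        = ∑ k, ∑ l, (p k)^2 * m k l := by
      rw [hT, Finset.sum_product]
      apply Finset.sum_congr rfl; intro k _; apply Finset.sum_congr rfl; intro l _
      rw [mul_pow, Real.sq_sqrt (hm k l)]
    have hg2 : ∑ pq ∈ T, (p pq.2 * Real.sqrt (m pq.1 pq.2))^2
        = ∑ k, ∑ l, (p k)^2 * m k l := by
      rw [hT, Finset.sum_product]
      rw [Finset.sum_comm]
      apply Finset.sum_congr rfl; intro l _; apply Finset.sum_congr rfl; intro k _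
      rw [mul_pow, Real.sq_sqrt (hm k l), hsym k l]
    calc (∑ k, ∑ l, p k * p l * m k l) ^ 2
        = (∑ pq ∈ T, (p pq.1 * Real.sqrt (m pq.1 pq.2))
            * (p pq.2 * Real.sqrt (m pq.1 pq.2)))^2 := by
          rw [hlhs]
      _ ≤ (∑ pq ∈ T, (p pq.1 * Real.sqrt (m pq.1 pq.2))^2) *
            (∑ pq ∈ T, (p pq.2 * Real.sqrt (m pq.1 pq.2))^2) :=
          Finset.sum_mul_sq_le_sq_mul_sq T _ _
      _ = (∑ k, ∑ l, (p k)^2 * m k l) ^ 2 := by rw [hf2, hg2]; ring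
  nlinarith [key, hF]

lemma parseval_bound (H : Matrix (Fin d) (Fin d) ℂ) (hH : H.IsHermitian)
    (A : Matrix (Fin d) (Fin d) ℂ) (k : Fin d) :
    ∑ l, Complex.normSq ((star (hH.eigenvectorUnitary : Matrix (Fin d) (Fin d) ℂ) * A *
        (hH.eigenvectorUnitary : Matrix (Fin d) (Fin d) ℂ)) l k) ≤ opNorm A ^ 2 := by
  set U := (hH.eigenvectorUnitary : Matrix (Fin d) (Fin d) ℂ) with hU
  set φ := hH.eigenvectorBasis with hφ
  set v : EuclideanSpace ℂ (Fin d) := Matrix.toEuclideanCLM (𝕜 := ℂ) A (φ k) with hv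
  have hventry : ∀ i, v i = ∑ j, A i j * (φ k) j := by
    intro i
    have h := congrFun (Matrix.ofLp_toEuclideanCLM (𝕜 := ℂ) A (φ k)) i
    exact h
  have hentry : ∀ l, (star U * A * U) l k = (inner ℂ (φ l) v : ℂ) := by
    intro l
    rw [PiLp.inner_apply]
    simp only [RCLike.inner_apply, hventry, Matrix.mul_apply, Matrix.star_apply,
      hU, Matrix.IsHermitian.eigenvectorUnitary_apply, Finset.sum_mul, Finset.mul_sum]
    rw [Finset.sum_comm]
    apply Finset.sum_congr rfl; intro j _
    apply Finset.sum_congr rfl; intro i _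
    simp only [RCLike.star_def]
    ring
  have hsum : ∑ l, Complex.normSq ((star U * A * U) l k) = ‖v‖ ^ 2 := by
    have hrepr : ∀ l, (inner ℂ (φ l) v : ℂ) = φ.repr v l := by
      intro l; rw [φ.repr_apply_apply]
    rw [← φ.repr.norm_map v]
    rw [EuclideanSpace.norm_eq]
    rw [Real.sq_sqrt (by positivity)]
    apply Finset.sum_congr rfl
    intro l _
    rw [hentry, hrepr]
    rw [← Complex.sq_norm]
  rw [hsum]
  have hnv : ‖v‖ ≤ opNorm A := by
    have := (Matrix.toEuclideanCLM (𝕜 := ℂ) A).le_opNorm (φ k)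
    rwa [φ.orthonormal.1 k, mul_one] at this
  have h0 : (0:ℝ) ≤ ‖v‖ := norm_nonneg v
  nlinarith

end EquilibrationAux

/-- equilibration of expectation values: the time average of the squared deviation
of `Tr[Aρ_t]` from `Tr[Aω]` is bounded by `‖A‖∞²/d^eff(ω)`. -/
theorem equilibration_of_expectation_values
    (d : ℕ) (H : Matrix (Fin d) (Fin d) ℂ) (hH : H.IsHermitian)
    (hgaps : HasNonDegenerateGaps hH)
    (ρ₀ : Matrix (Fin d) (Fin d) ℂ) (hρ₀ : IsDensityMatrix ρ₀)
    (A : Matrix (Fin d) (Fin d) ℂ) (hA : A.IsHermitian) :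
    limsup (fun τ : ℝ =>
        (1 / τ) * ∫ t in (0:ℝ)..τ,
          (expVal A (evol H t ρ₀) - expVal A (dephase hH ρ₀)) ^ 2) atTop
      ≤ opNorm A ^ 2 / dEff (dephase hH ρ₀) := by
  classical
  set U := (hH.eigenvectorUnitary : Matrix (Fin d) (Fin d) ℂ) with hUdef
  have hU1 : star U * U = 1 := Matrix.mem_unitaryGroup_iff'.mp hH.eigenvectorUnitary.2
  have hU2 : U * star U = 1 := Matrix.mem_unitaryGroup_iff.mp hH.eigenvectorUnitary.2
  set ρ' := star U * ρ₀ * U with hρ'def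
  set A' := star U * A * U with hA'def
  set E := hH.eigenvalues with hEdef
  have hρ'psd : ρ'.PosSemidef := by
    rw [hρ'def, Matrix.star_eq_conjTranspose]
    exact hρ₀.1.conjTranspose_mul_mul_same U
  have hA'herm : A'.IsHermitian := by
    have : A'ᴴ = A' := by
      rw [hA'def, Matrix.star_eq_conjTranspose]
      calc (Uᴴ * A * U)ᴴ = Uᴴ * Aᴴ * U := by
            rw [Matrix.conjTranspose_mul, Matrix.conjTranspose_mul,
              Matrix.conjTranspose_conjTranspose, Matrix.mul_assoc]
        _ = Uᴴ * A * U := by rw [hA.eq]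
    exact this
  -- diagonal entries of ρ'
  have hdiagρ' : ∀ k, 0 ≤ (ρ' k k).re ∧ (ρ' k k).im = 0 := by
    intro k
    have h := hρ'psd.dotProduct_mulVec_nonneg (Pi.single k 1)
    have hent : dotProduct (star (Pi.single k (1:ℂ))) (ρ' *ᵥ Pi.single k 1) = ρ' k k := by
      simp [dotProduct, Matrix.mulVec, Pi.single_apply, Finset.sum_ite_eq, mul_comm]
    rw [hent] at h
    have := Complex.le_def.mp h
    exact ⟨by simpa using this.1, (this.2).symm⟩
  -- generic conjugation identity
  have conj_mul : ∀ X Y : Matrix (Fin d) (Fin d) ℂ,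
      (U * X * star U) * ρ₀ * (U * Y * star U) = U * (X * ρ' * Y) * star U := by
    intro X Y
    rw [hρ'def]
    simp only [Matrix.mul_assoc]
  -- dephasing in the eigenbasis
  have hdeph : dephase hH ρ₀ = U * Matrix.diagonal (fun k => ρ' k k) * star U := by
    unfold dephase
    calc ∑ k, outer (hH.eigenvectorBasis k) * ρ₀ * outer (hH.eigenvectorBasis k)
        = ∑ k, U * (Matrix.single k k 1 * ρ' * Matrix.single k k 1) * star U := by
          apply Finset.sum_congr rfl
          intro k _
          rw [outer_eq_conj H hH k, conj_mul]
      _ = U * (∑ k, Matrix.single k k 1 * ρ' * Matrix.single k k 1) * star U := by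
          rw [← Finset.sum_mul, ← Finset.mul_sum]
      _ = U * Matrix.diagonal (fun k => ρ' k k) * star U := by rw [sum_corners]
  -- trace conjugation identity
  have htr : ∀ M : Matrix (Fin d) (Fin d) ℂ,
      (A * (U * M * star U)).trace = (A' * M).trace := by
    intro M
    have h1 : A * (U * M * star U) = (A * U * M) * star U := by simp only [Matrix.mul_assoc]
    rw [h1, Matrix.trace_mul_comm]
    have h2 : star U * (A * U * M) = (star U * A * U) * M := by simp only [Matrix.mul_assoc]
    rw [h2, hA'def]
  -- the off-diagonal data
  set S : Finset (Fin d × Fin d) := Finset.univ.filter (fun p => ¬ p.1 = p.2) with hSdef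
  set D : Finset (Fin d × Fin d) := Finset.univ.filter (fun p => p.1 = p.2) with hDdef
  set cf : Fin d × Fin d → ℂ := fun p => ρ' p.1 p.2 * A' p.2 p.1 with hcfdef
  set θf : Fin d × Fin d → ℝ := fun p => E p.2 - E p.1 with hθdef
  -- expectation value along the evolution
  have hevol : ∀ t : ℝ, expVal A (evol H t ρ₀)
      = (∑ p : Fin d × Fin d, Complex.exp (Complex.I * θf p * t) * cf p).re := by
    intro t
    have hexp1 := exp_smul_herm H hH (-(Complex.I * t))
    have hexp2 := exp_smul_herm H hH (Complex.I * t)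
    have hev : evol H t ρ₀ = U * (Matrix.diagonal (fun k => Complex.exp (-(Complex.I * t) * E k))
        * ρ' * Matrix.diagonal (fun k => Complex.exp ((Complex.I * t) * E k))) * star U := by
      unfold evol
      rw [hexp1, hexp2, ← hUdef, conj_mul]
    unfold expVal
    rw [hev, htr]
    congr 1
    have hterm : ∀ k l : Fin d,
        Complex.exp (-(Complex.I * t) * E l) * Complex.exp ((Complex.I * t) * E k)
          = Complex.exp (Complex.I * ((E k - E l : ℝ) : ℂ) * t) := by
      intro k l
      rw [← Complex.exp_add]
      congr 1
      push_cast
      ring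
    have hentry : ∀ k, (A' * (Matrix.diagonal (fun k => Complex.exp (-(Complex.I * t) * E k))
        * ρ' * Matrix.diagonal (fun k => Complex.exp ((Complex.I * t) * E k)))) k k
        = ∑ l, A' k l * (Complex.exp (-(Complex.I * t) * E l) * ρ' l k
            * Complex.exp ((Complex.I * t) * E k)) := by
      intro k
      rw [Matrix.mul_apply]
      apply Finset.sum_congr rfl
      intro l _
      rw [Matrix.mul_diagonal, Matrix.diagonal_mul]
    calc (A' * (Matrix.diagonal (fun k => Complex.exp (-(Complex.I * t) * E k))
        * ρ' * Matrix.diagonal (fun k => Complex.exp ((Complex.I * t) * E k)))).trace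
        = ∑ k, ∑ l, A' k l * (Complex.exp (-(Complex.I * t) * E l) * ρ' l k
            * Complex.exp ((Complex.I * t) * E k)) := by
          unfold Matrix.trace
          exact Finset.sum_congr rfl (fun k _ => hentry k)
      _ = ∑ l, ∑ k, A' k l * (Complex.exp (-(Complex.I * t) * E l) * ρ' l k
            * Complex.exp ((Complex.I * t) * E k)) := Finset.sum_comm
      _ = ∑ p : Fin d × Fin d, Complex.exp (Complex.I * θf p * t) * cf p := by
          rw [Fintype.sum_prod_type]
          apply Finset.sum_congr rfl; intro l _
          apply Finset.sum_congr rfl; intro k _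
          simp only [hcfdef, hθdef]
          rw [← hterm k l]
          ring
  -- expectation value of the dephased state
  have hdephval : expVal A (dephase hH ρ₀) = (∑ p ∈ D, cf p).re := by
    unfold expVal
    rw [hdeph, htr]
    congr 1
    have h1 : (A' * Matrix.diagonal (fun k => ρ' k k)).trace = ∑ k, A' k k * ρ' k k := by
      simp [Matrix.trace, Matrix.diag_apply, Matrix.mul_diagonal]
    rw [h1]
    rw [hDdef, Finset.sum_filter, Fintype.sum_prod_type]
    apply Finset.sum_congr rfl; intro k _
    simp [Finset.sum_ite_eq, hcfdef, mul_comm]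
  -- the key pointwise identity
  have hkey : ∀ t : ℝ, expVal A (evol H t ρ₀) - expVal A (dephase hH ρ₀)
      = (∑ p ∈ S, Complex.exp (Complex.I * θf p * t) * cf p).re := by
    intro t
    rw [hevol t, hdephval, ← Complex.sub_re]
    congr 1
    have hsplit := Finset.sum_filter_add_sum_filter_not Finset.univ
      (fun p : Fin d × Fin d => p.1 = p.2)
      (fun p => Complex.exp (Complex.I * θf p * t) * cf p)
    have hdiag : ∑ p ∈ D, Complex.exp (Complex.I * θf p * t) * cf p = ∑ p ∈ D, cf p := by
      apply Finset.sum_congr rfl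
      intro p hp
      have hpd : p.1 = p.2 := (Finset.mem_filter.mp hp).2
      have : θf p = 0 := by rw [hθdef]; simp [hpd]
      rw [this]
      simp
    have : (∑ p : Fin d × Fin d, Complex.exp (Complex.I * θf p * t) * cf p)
        = (∑ p ∈ D, cf p) + ∑ p ∈ S, Complex.exp (Complex.I * θf p * t) * cf p := by
      rw [← hdiag, hDdef, hSdef, ← hsplit]
    rw [this]
    ring
  -- gap injectivity
  have hinj : ∀ p ∈ S, ∀ q ∈ S, θf p = θf q → p = q := by
    intro p hp q hq h
    have hp' : ¬ p.1 = p.2 := (Finset.mem_filter.mp hp).2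
    have h' : E p.2 - E p.1 = E q.2 - E q.1 := h
    rcases hgaps p.2 p.1 q.2 q.1 h' with ⟨h1, _⟩ | ⟨h1, h2⟩
    · exact absurd h1.symm hp'
    · exact Prod.ext h2 h1
  obtain ⟨C, hC0, hCb⟩ := avg_bound S cf θf hinj
  set Sval := ∑ p ∈ S, Complex.normSq (cf p) with hSvaldef
  -- continuity of z
  have hzcont : Continuous fun t : ℝ => ∑ p ∈ S, Complex.exp (Complex.I * θf p * t) * cf p :=
    continuous_finset_sum _ (fun p _ => (Complex.continuous_exp.comp
      (continuous_const.mul Complex.continuous_ofReal)).mul continuous_const)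
  -- the main bound for positive times
  have hFle : ∀ τ : ℝ, 0 < τ →
      (1 / τ) * (∫ t in (0:ℝ)..τ,
        (expVal A (evol H t ρ₀) - expVal A (dephase hH ρ₀)) ^ 2) ≤ Sval + C * (1/τ) := by
    intro τ hτ
    have hint1 : (∫ t in (0:ℝ)..τ,
        (expVal A (evol H t ρ₀) - expVal A (dephase hH ρ₀)) ^ 2)
        = ∫ t in (0:ℝ)..τ, ((∑ p ∈ S, Complex.exp (Complex.I * θf p * t) * cf p).re) ^ 2 :=
      intervalIntegral.integral_congr (fun t _ => by rw [hkey t])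
    have hint2 : (∫ t in (0:ℝ)..τ, ((∑ p ∈ S, Complex.exp (Complex.I * θf p * t) * cf p).re) ^ 2)
        ≤ ∫ t in (0:ℝ)..τ, Complex.normSq (∑ p ∈ S, Complex.exp (Complex.I * θf p * t) * cf p) := by
      apply intervalIntegral.integral_mono_on (le_of_lt hτ)
      · exact ((Complex.continuous_re.comp hzcont).pow 2).intervalIntegrable _ _
      · exact (Complex.continuous_normSq.comp hzcont).intervalIntegrable _ _
      · intro t _
        have := sq_nonneg ((∑ p ∈ S, Complex.exp (Complex.I * θf p * t) * cf p).im)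
        rw [Complex.normSq_apply]
        nlinarith
    calc (1 / τ) * (∫ t in (0:ℝ)..τ,
          (expVal A (evol H t ρ₀) - expVal A (dephase hH ρ₀)) ^ 2)
        ≤ (1 / τ) * (τ * Sval + C) := by
          apply mul_le_mul_of_nonneg_left _ (by positivity)
          rw [hint1]
          exact le_trans hint2 (hCb τ)
      _ = Sval + C * (1/τ) := by field_simp
  have hFnn : ∀ τ : ℝ, 0 < τ → 0 ≤
      (1 / τ) * ∫ t in (0:ℝ)..τ,
        (expVal A (evol H t ρ₀) - expVal A (dephase hH ρ₀)) ^ 2 := by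
    intro τ hτ
    exact mul_nonneg (by positivity)
      (intervalIntegral.integral_nonneg (le_of_lt hτ) (fun t _ => sq_nonneg _))
  -- limsup bound
  have hdivtend : Tendsto (fun τ : ℝ => 1/τ) atTop (nhds (0:ℝ)) := by
    simp only [one_div]
    exact tendsto_inv_atTop_zero
  have hg : Tendsto (fun τ : ℝ => Sval + C * (1/τ)) atTop (nhds (Sval + C * 0)) :=
    tendsto_const_nhds.add (tendsto_const_nhds.mul hdivtend)
  have hlims : limsup (fun τ : ℝ =>
      (1 / τ) * ∫ t in (0:ℝ)..τ,
        (expVal A (evol H t ρ₀) - expVal A (dephase hH ρ₀)) ^ 2) atTop ≤ Sval := by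
    have h1 : (fun τ : ℝ => (1 / τ) * ∫ t in (0:ℝ)..τ,
        (expVal A (evol H t ρ₀) - expVal A (dephase hH ρ₀)) ^ 2)
          ≤ᶠ[atTop] fun τ => Sval + C * (1/τ) :=
      (eventually_gt_atTop 0).mono (fun τ hτ => hFle τ hτ)
    have h2 : Filter.IsBoundedUnder (· ≤ ·) atTop (fun τ : ℝ => Sval + C * (1/τ)) :=
      hg.isBoundedUnder_le
    have h3 : Filter.IsCoboundedUnder (· ≤ ·) atTop (fun τ : ℝ =>
        (1 / τ) * ∫ t in (0:ℝ)..τ,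
          (expVal A (evol H t ρ₀) - expVal A (dephase hH ρ₀)) ^ 2) :=
      Filter.isCoboundedUnder_le_of_eventually_le atTop (x := 0)
        ((eventually_gt_atTop 0).mono (fun τ hτ => hFnn τ hτ))
    calc limsup _ atTop ≤ limsup (fun τ : ℝ => Sval + C * (1/τ)) atTop :=
          Filter.limsup_le_limsup h1 h3 h2
      _ = Sval + C * 0 := hg.limsup_eq
      _ = Sval := by ring
  -- the algebraic bound on Sval
  have hpurity : purity (dephase hH ρ₀) = ∑ k, ((ρ' k k).re)^2 := by
    unfold purity
    rw [hdeph]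
    set g : Fin d → ℂ := fun k => ρ' k k with hgdef
    have h1 : (U * Matrix.diagonal g * star U) * (U * Matrix.diagonal g * star U)
        = U * (Matrix.diagonal g * (star U * U) * Matrix.diagonal g) * star U := by
      simp only [Matrix.mul_assoc]
    rw [h1, hU1, Matrix.mul_one, Matrix.diagonal_mul_diagonal]
    have h2 : (U * Matrix.diagonal (fun i => g i * g i) * star U).trace
        = (Matrix.diagonal (fun i => g i * g i)).trace := by
      rw [Matrix.trace_mul_cycle, hU1, Matrix.one_mul]
    rw [h2, Matrix.trace_diagonal, Complex.re_sum]
    apply Finset.sum_congr rfl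
    intro k _
    have him := (hdiagρ' k).2
    rw [hgdef]
    simp only [Complex.mul_re, him]
    ring
  have hfinal : Sval ≤ opNorm A ^ 2 * purity (dephase hH ρ₀) := by
    set p : Fin d → ℝ := fun k => (ρ' k k).re with hpdef
    set m : Fin d → Fin d → ℝ := fun k l => Complex.normSq (A' l k) with hmdef
    have hmnn : ∀ k l, 0 ≤ m k l := fun k l => Complex.normSq_nonneg _
    have hmsym : ∀ k l, m k l = m l k := by
      intro k l
      rw [hmdef]
      simp only []
      have : A' l k = (starRingEnd ℂ) (A' k l) := by
        have := congrFun (congrFun hA'herm.eq l) k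
        rw [← this]
        simp [Matrix.conjTranspose_apply]
      rw [this, Complex.normSq_conj]
    have hstep1 : Sval ≤ ∑ q ∈ S, p q.1 * p q.2 * m q.1 q.2 := by
      apply Finset.sum_le_sum
      intro q _
      rw [hcfdef, Complex.normSq_mul]
      apply mul_le_mul_of_nonneg_right _ (Complex.normSq_nonneg _)
      exact psd_entry_sq ρ' hρ'psd q.1 q.2
    have hstep2 : (∑ q ∈ S, p q.1 * p q.2 * m q.1 q.2)
        ≤ ∑ q : Fin d × Fin d, p q.1 * p q.2 * m q.1 q.2 := by
      apply Finset.sum_le_sum_of_subset_of_nonneg (Finset.filter_subset _ _)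
      intro q _ _
      exact mul_nonneg (mul_nonneg (hdiagρ' q.1).1 (hdiagρ' q.2).1) (hmnn _ _)
    have hstep3 : (∑ q : Fin d × Fin d, p q.1 * p q.2 * m q.1 q.2)
        = ∑ k, ∑ l, p k * p l * m k l := by rw [Fintype.sum_prod_type]
    have hstep4 := double_cs p m hmnn hmsym
    have hstep5 : (∑ k, ∑ l, (p k)^2 * m k l) ≤ ∑ k, (p k)^2 * opNorm A ^ 2 := by
      apply Finset.sum_le_sum
      intro k _
      rw [← Finset.mul_sum]
      apply mul_le_mul_of_nonneg_left _ (sq_nonneg _)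
      exact parseval_bound H hH A k
    have hstep6 : (∑ k, (p k)^2 * opNorm A ^ 2) = opNorm A ^ 2 * purity (dephase hH ρ₀) := by
      rw [hpurity, Finset.mul_sum]
      apply Finset.sum_congr rfl
      intro k _
      ring
    calc Sval ≤ ∑ q ∈ S, p q.1 * p q.2 * m q.1 q.2 := hstep1
      _ ≤ ∑ q : Fin d × Fin d, p q.1 * p q.2 * m q.1 q.2 := hstep2
      _ = ∑ k, ∑ l, p k * p l * m k l := hstep3
      _ ≤ ∑ k, ∑ l, (p k)^2 * m k l := hstep4
      _ ≤ ∑ k, (p k)^2 * opNorm A ^ 2 := hstep5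
      _ = opNorm A ^ 2 * purity (dephase hH ρ₀) := hstep6
  have hRHS : opNorm A ^ 2 / dEff (dephase hH ρ₀) = opNorm A ^ 2 * purity (dephase hH ρ₀) := by
    unfold dEff
    rw [one_div, div_inv_eq_mul]
  rw [hRHS]
  exact le_trans hlims hfinal

end PQSM
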